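/- arXiv:2105.07260 — 2 statements merged into one kernel-verified Lean document; each statement's English description precedes it below -/
import Mathlib

section
/- The permute-and-flip distribution with scores q and rate λ is equal, as a probability distribution on Fin k, to the report-noisy-max-with-exponential-noise distribution with the same scores q and rate λ. -/
open MeasureTheory ProbabilityTheory Real

/-- The Bernoulli distribution on `Bool` with success probability `p`
(a probability measure whenever `0 ≤ p ≤ 1`). -/
noncomputable def bernoulliMeasure (p : ℝ) : Measure Bool :=
  ENNReal.ofReal p • Measure.dirac true + ENNReal.ofReal (1 - p) • Measure.dirac false

/-- Every function on the permutation group of `Fin k` is measurable (discrete σ-algebra). -/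
instance (n : ℕ) : MeasurableSpace (Equiv.Perm (Fin n)) := ⊤

/-- The joint law of a uniformly random permutation of `Fin k` together with (independent of it)
independent Bernoulli coins, the `i`-th having success probability `p i`. -/
noncomputable def permCoinsMeasure (k : ℕ) (p : Fin k → ℝ) :
    Measure (Equiv.Perm (Fin k) × (Fin k → Bool)) :=
  ((PMF.uniformOfFintype (Equiv.Perm (Fin k))).toMeasure).prod
    (Measure.pi fun i => bernoulliMeasure (p i))

open Finset
open scoped ENNReal

instance (n : ℕ) : DiscreteMeasurableSpace (Equiv.Perm (Fin n)) := ⟨fun _ => trivial⟩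

lemma bern_true (p : ℝ) : bernoulliMeasure p {true} = ENNReal.ofReal p := by
  simp [_root_.bernoulliMeasure, Measure.dirac_apply' _ (by trivial : MeasurableSet ({true} : Set Bool))]

lemma bern_false (p : ℝ) : bernoulliMeasure p {false} = ENNReal.ofReal (1 - p) := by
  simp [_root_.bernoulliMeasure, Measure.dirac_apply' _ (by trivial : MeasurableSet ({false} : Set Bool))]

lemma bern_univ (p : ℝ) (h0 : 0 ≤ p) (h1 : p ≤ 1) : bernoulliMeasure p Set.univ = 1 := by
  simp only [_root_.bernoulliMeasure, Measure.coe_add, Measure.coe_smul, Pi.add_apply, Pi.smul_apply,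
    Measure.dirac_apply_of_mem (Set.mem_univ _), smul_eq_mul, mul_one]
  rw [← ENNReal.ofReal_add h0 (by linarith)]
  simp

instance bern_fin (p : ℝ) : IsFiniteMeasure (bernoulliMeasure p) := by
  constructor
  simp only [_root_.bernoulliMeasure, Measure.coe_add, Measure.coe_smul, Pi.add_apply, Pi.smul_apply,
    Measure.dirac_apply_of_mem (Set.mem_univ _), smul_eq_mul, mul_one]
  exact ENNReal.add_lt_top.2 ⟨ENNReal.ofReal_lt_top, ENNReal.ofReal_lt_top⟩

lemma integral_exp_Ioi {b : ℝ} (a : ℝ) (hb : 0 < b) :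
    ∫ t in Set.Ioi a, exp (-(b * t)) = exp (-(b * a)) / b := by
  have := integral_comp_mul_left_Ioi (fun x => exp (-x)) a hb
  simp only [smul_eq_mul] at this
  rw [show (fun t => exp (-(b*t))) = (fun t => (fun x => exp (-x)) (b*t)) from rfl, this,
    integral_exp_neg_Ioi]
  ring

lemma expMeasure_Iio {r : ℝ} (hr : 0 < r) (c : ℝ) :
    expMeasure r (Set.Iio c) = ENNReal.ofReal (if 0 ≤ c then 1 - exp (-(r * c)) else 0) := by
  rw [expMeasure, gammaMeasure, withDensity_apply _ measurableSet_Iio,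
    setLIntegral_congr (Iio_ae_eq_Iic (a := c)),
    show gammaPDF 1 r = exponentialPDF r from rfl,
    lintegral_exponentialPDF_eq_antiDeriv hr]

noncomputable def leader {k : ℕ} (T : Finset (Fin k)) (hT : T.Nonempty) (σ : Equiv.Perm (Fin k)) :
    Fin k := σ ((T.image σ.symm).max' (hT.image _))

lemma leader_spec {k : ℕ} (T : Finset (Fin k)) (hT : T.Nonempty) (σ : Equiv.Perm (Fin k)) :
    leader T hT σ ∈ T ∧ ∀ j ∈ T, j ≠ leader T hT σ → σ.symm j < σ.symm (leader T hT σ) := by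
  obtain ⟨j₀, hj₀T, hj₀⟩ := Finset.mem_image.1 ((T.image σ.symm).max'_mem (hT.image _))
  have hmm : σ.symm (leader T hT σ) = (T.image σ.symm).max' (hT.image _) :=
    Equiv.symm_apply_apply _ _
  have hl : leader T hT σ = j₀ := σ.symm.injective (by rw [hmm, ← hj₀])
  refine ⟨hl ▸ hj₀T, fun j hj hne => ?_⟩
  have hle : σ.symm j ≤ σ.symm (leader T hT σ) :=
    hmm ▸ Finset.le_max' _ _ (Finset.mem_image_of_mem _ hj)
  exact hle.lt_of_ne (fun hh => hne (σ.symm.injective hh))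

lemma leader_eq {k : ℕ} (T : Finset (Fin k)) (hT : T.Nonempty) (σ : Equiv.Perm (Fin k))
    {t : Fin k} (ht : t ∈ T) (h : ∀ j ∈ T, j ≠ t → σ.symm j < σ.symm t) :
    leader T hT σ = t := by
  by_contra hne
  obtain ⟨hmem, hspec⟩ := leader_spec T hT σ
  exact absurd (h _ hmem hne) (not_lt.2 (hspec t ht (Ne.symm hne)).le)

lemma mul_perm_symm_apply {k : ℕ} (σ : Equiv.Perm (Fin k)) (i t x : Fin k) :
    (Equiv.swap i t * σ).symm x = σ.symm (Equiv.swap i t x) := by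
  rw [Equiv.Perm.mul_def, Equiv.symm_trans_apply, Equiv.symm_swap]

lemma leader_swap {k : ℕ} (T : Finset (Fin k)) (hT : T.Nonempty) (σ : Equiv.Perm (Fin k))
    {i t : Fin k} (hi : i ∈ T) (ht : t ∈ T) (h : leader T hT σ = t) :
    leader T hT (Equiv.swap i t * σ) = i := by
  rcases eq_or_ne t i with rfl | hti
  · simpa [Equiv.Perm.refl_mul] using h
  obtain ⟨_, hspec⟩ := leader_spec T hT σ
  rw [h] at hspec
  apply leader_eq T hT _ hi
  intro j hj hji
  rw [mul_perm_symm_apply, mul_perm_symm_apply, Equiv.swap_apply_left]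
  rcases eq_or_ne j t with rfl | hjt
  · rw [Equiv.swap_apply_right]
    exact hspec i hi hti.symm
  · rw [Equiv.swap_apply_of_ne_of_ne hji hjt]
    exact hspec j hj hjt

theorem perm_count (k : ℕ) (i : Fin k) (S : Finset (Fin k)) (hS : i ∉ S) :
    ((Finset.univ.filter
        (fun σ : Equiv.Perm (Fin k) => ∀ j ∈ S, σ.symm j < σ.symm i)).card) * (S.card + 1)
      = (Fintype.card (Equiv.Perm (Fin k))) := by
  classical
  set T := insert i S with hT
  have hiT : i ∈ T := mem_insert_self _ _
  have hTne : T.Nonempty := ⟨i, hiT⟩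
  have hcard : Fintype.card (Equiv.Perm (Fin k)) =
      ∑ t ∈ T, (univ.filter (fun σ : Equiv.Perm (Fin k) => leader T hTne σ = t)).card := by
    rw [← Finset.card_univ]
    exact Finset.card_eq_sum_card_fiberwise (fun σ _ => (leader_spec T hTne σ).1)
  have hfib : ∀ t ∈ T, (univ.filter fun σ : Equiv.Perm (Fin k) => leader T hTne σ = t).card
      = (univ.filter fun σ : Equiv.Perm (Fin k) => leader T hTne σ = i).card := by
    intro t ht
    apply Finset.card_nbij' (fun σ => Equiv.swap i t * σ) (fun σ => Equiv.swap i t * σ)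
    · intro σ hσ
      simp only [Finset.coe_filter, Set.mem_setOf_eq, mem_filter, mem_univ, true_and] at hσ ⊢
      exact leader_swap T hTne σ hiT ht hσ
    · intro σ hσ
      simp only [Finset.coe_filter, Set.mem_setOf_eq, mem_filter, mem_univ, true_and] at hσ ⊢
      rw [Equiv.swap_comm]
      exact leader_swap T hTne σ ht hiT hσ
    · intro σ _; simp [← mul_assoc]
    · intro σ _; simp [← mul_assoc]
  have hset : (univ.filter fun σ : Equiv.Perm (Fin k) => leader T hTne σ = i)
      = univ.filter (fun σ : Equiv.Perm (Fin k) => ∀ j ∈ S, σ.symm j < σ.symm i) := by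
    apply Finset.filter_congr; intro σ _
    constructor
    · intro h j hj
      have hji : j ≠ i := fun hx => hS (hx ▸ hj)
      have := (leader_spec T hTne σ).2 j (mem_insert_of_mem hj) (by rw [h]; exact hji)
      rwa [h] at this
    · intro h
      refine leader_eq T hTne σ hiT (fun j hj hji => h j ?_)
      rcases mem_insert.1 hj with rfl | hj
      · exact absurd rfl hji
      · exact hj
  rw [hcard, Finset.sum_congr rfl hfib, Finset.sum_const, hset, smul_eq_mul,
    hT, Finset.card_insert_of_notMem hS, mul_comm]

lemma exponentialPDFReal_eq' (r x : ℝ) :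
    exponentialPDFReal r x = if 0 ≤ x then r * exp (-(r * x)) else 0 := by
  rw [exponentialPDFReal, gammaPDFReal]
  simp only [rpow_one, Real.Gamma_one, div_one, sub_self, rpow_zero, mul_one]

section
variable {k : ℕ} (lam : ℝ)

lemma sum_form (E : Finset (Fin k)) (c : Fin k → ℝ) (t : ℝ) :
    lam * exp (-(lam * t)) * ∏ j ∈ E, (1 - c j * exp (-(lam * t)))
      = ∑ S ∈ E.powerset, (∏ j ∈ S, -(c j)) * (lam * exp (-(lam * (S.card + 1) * t))) := by
  have h1 : ∀ j ∈ E, (1 : ℝ) - c j * exp (-(lam * t)) = -(c j) * exp (-(lam * t)) + 1 := by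
    intro j _; ring
  rw [Finset.prod_congr rfl h1, Finset.prod_add]
  rw [Finset.mul_sum, Finset.sum_congr rfl]
  intro S hS
  rw [Finset.prod_const_one, mul_one, Finset.prod_mul_distrib, Finset.prod_const]
  have : exp (-(lam * (S.card + 1) * t)) = exp (-(lam * t)) ^ (S.card + 1) := by
    rw [← Real.exp_nat_mul]; congr 1; push_cast; ring
  rw [this, pow_succ]
  ring

lemma integrable_term (hlam : 0 < lam) (a : ℝ) (n : ℕ) (C : ℝ) :
    IntegrableOn (fun t => C * (lam * exp (-(lam * (n + 1) * t)))) (Set.Ioi a) := by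
  have hb : (0:ℝ) < lam * (n + 1) := by positivity
  have := ((exp_neg_integrableOn_Ioi a hb).const_mul lam).const_mul C
  rw [IntegrableOn]
  convert this using 2 with t
  ring_nf

lemma integral_eval (hlam : 0 < lam) (E : Finset (Fin k)) (c : Fin k → ℝ) (a : ℝ) :
    ∫ t in Set.Ioi a, lam * exp (-(lam * t)) * ∏ j ∈ E, (1 - c j * exp (-(lam * t)))
      = ∑ S ∈ E.powerset, (∏ j ∈ S, -(c j)) * exp (-(lam * a)) ^ (S.card + 1) / (S.card + 1) := by
  rw [setIntegral_congr_fun measurableSet_Ioi (fun t _ => sum_form lam E c t),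
    integral_finset_sum _ (fun S _ => integrable_term lam hlam a S.card (∏ j ∈ S, -(c j)))]
  refine Finset.sum_congr rfl (fun S _ => ?_)
  rw [MeasureTheory.integral_const_mul, MeasureTheory.integral_const_mul,
    integral_exp_Ioi a (by positivity : (0:ℝ) < lam * (S.card + 1))]
  have : exp (-(lam * (S.card + 1) * a)) = exp (-(lam * a)) ^ (S.card + 1) := by
    rw [← Real.exp_nat_mul]; congr 1; push_cast; ring
  rw [this]
  have hl : lam ≠ 0 := hlam.ne'
  field_simp

end

theorem rhs_eval (k : ℕ) (q : Fin k → ℝ) (lam : ℝ) (hlam : 0 < lam)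
    (qstar : ℝ) (hqstar : IsGreatest (Set.range q) qstar) (i : Fin k)
    (hInt : IntegrableOn (fun t => lam * exp (-(lam * t)) *
        ∏ j ∈ univ.erase i, (1 - exp (lam * (q j - q i)) * exp (-(lam * t))))
        (Set.Ici (qstar - q i))) :
    Measure.pi (fun _ : Fin k => expMeasure lam)
        {x | ∀ j : Fin k, j ≠ i → q j + x j < q i + x i}
      = ENNReal.ofReal (∫ t in Set.Ioi (qstar - q i),
          lam * exp (-(lam * t)) *
            ∏ j ∈ univ.erase i, (1 - exp (lam * (q j - q i)) * exp (-(lam * t)))) := by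
  classical
  haveI : IsProbabilityMeasure (expMeasure lam) := isProbabilityMeasure_expMeasure hlam
  have hqi : q i ≤ qstar := hqstar.2 (Set.mem_range_self i)
  set φ : ℝ → ℝ := fun t => lam * exp (-(lam * t)) *
      ∏ j ∈ univ.erase i, (1 - exp (lam * (q j - q i)) * exp (-(lam * t))) with hφ
  set gre : ℝ → ℝ := fun c => if 0 ≤ c then 1 - exp (-(lam * c)) else 0 with hgre
  set S : Set (Fin k → ℝ) := {x | ∀ j : Fin k, j ≠ i → q j + x j < q i + x i} with hSdef
  have hSm : MeasurableSet S := by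
    have : S = ⋂ (j : Fin k), ⋂ (_ : j ≠ i), {x : Fin k → ℝ | q j + x j < q i + x i} := by
      ext x; simp [hSdef]
    rw [this]
    exact MeasurableSet.iInter fun j => MeasurableSet.iInter fun _ =>
      measurableSet_lt ((measurable_pi_apply j).const_add _) ((measurable_pi_apply i).const_add _)
  haveI : Unique {j : Fin k // j = i} := ⟨⟨⟨i, rfl⟩⟩, fun j => Subtype.ext j.2⟩
  letI instF : Fintype {j : Fin k // j = i} := Unique.fintype
  set e := MeasurableEquiv.piEquivPiSubtypeProd (fun _ : Fin k => ℝ) (fun j => j = i) with he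
  have hmp := measurePreserving_piEquivPiSubtypeProd
    (fun _ : Fin k => expMeasure lam) (fun j => j = i)
  have hAm : MeasurableSet (e.symm ⁻¹' S) := e.symm.measurable hSm
  have h1 := hmp.measure_preimage hAm.nullMeasurableSet
  have hpre : e ⁻¹' (e.symm ⁻¹' S) = S := by ext x; simp
  rw [show ⇑(MeasurableEquiv.piEquivPiSubtypeProd (fun _ : Fin k => ℝ) (fun j => j = i)) = ⇑e
      from rfl, hpre] at h1
  rw [h1, Measure.prod_apply hAm]
  -- slice computation
  have hslice : ∀ a : {j : Fin k // j = i} → ℝ,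
      (Measure.pi fun _ : {j : Fin k // ¬ j = i} => expMeasure lam)
          (Prod.mk a ⁻¹' (e.symm ⁻¹' S))
        = ENNReal.ofReal (∏ j ∈ univ.erase i, gre (q i + (MeasurableEquiv.funUnique {j : Fin k // j = i} ℝ) a - q j)) := by
    intro a
    have hset : Prod.mk a ⁻¹' (e.symm ⁻¹' S)
        = Set.pi Set.univ (fun j : {j : Fin k // ¬ j = i} =>
            Set.Iio (q i + (MeasurableEquiv.funUnique {j : Fin k // j = i} ℝ) a - q j.1)) := by
      ext y
      simp only [Set.mem_preimage, hSdef, Set.mem_setOf_eq, Set.mem_pi, Set.mem_univ,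
        true_implies, Set.mem_Iio, he, MeasurableEquiv.piEquivPiSubtypeProd,
        MeasurableEquiv.symm, MeasurableEquiv.coe_mk, Equiv.piEquivPiSubtypeProd_symm_apply]
      have ha : ∀ x : {j : Fin k // j = i}, a x = (MeasurableEquiv.funUnique {j : Fin k // j = i} ℝ) a :=
        fun x => congrArg a (Subsingleton.elim x _)
      constructor
      · intro h j
        have := h j.1 j.2
        rw [dif_neg j.2, dif_pos trivial, ha] at this
        linarith
      · intro h j hj
        rw [dif_neg hj, dif_pos trivial, ha]
        have := h ⟨j, hj⟩
        linarith
    rw [hset, Measure.pi_pi]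
    have hval : ∀ j : {j : Fin k // ¬ j = i},
        expMeasure lam (Set.Iio (q i + (MeasurableEquiv.funUnique {j : Fin k // j = i} ℝ) a - q j.1))
          = ENNReal.ofReal (gre (q i + (MeasurableEquiv.funUnique {j : Fin k // j = i} ℝ) a - q j.1)) := fun j =>
      expMeasure_Iio hlam _
    rw [Finset.prod_congr rfl (fun j _ => hval j), ← ENNReal.ofReal_prod_of_nonneg]
    · congr 1
      exact (Finset.prod_subtype (univ.erase i)
        (fun j => by simp [Finset.mem_erase]) (fun j => gre (q i + (MeasurableEquiv.funUnique {j : Fin k // j = i} ℝ) a - q j))).symm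
    · intro j _
      rw [hgre]
      dsimp only
      split_ifs with h
      · have := exp_le_one_iff.2 (by nlinarith : -(lam * (q i + (MeasurableEquiv.funUnique {j : Fin k // j = i} ℝ) a - q ↑j)) ≤ 0)
        linarith
      · exact le_rfl
  simp_rw [hslice]
  -- integrate out the unique coordinate
  have hGmeas : Measurable fun t : ℝ =>
      ENNReal.ofReal (∏ j ∈ univ.erase i, gre (q i + t - q j)) := by
    apply Measurable.ennreal_ofReal
    apply Finset.measurable_prod
    intro j _
    apply Measurable.ite (measurableSet_le measurable_const (by fun_prop)) (by fun_prop)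
      measurable_const
  rw [Subsingleton.elim (Subtype.fintype (fun j : Fin k => j = i))
    (Unique.fintype (α := {j : Fin k // j = i}))]
  have hu := measurePreserving_funUnique (expMeasure lam) {j : Fin k // j = i}
  have h2 : (∫⁻ a : {j : Fin k // j = i} → ℝ, ENNReal.ofReal (∏ j ∈ univ.erase i,
      gre (q i + (MeasurableEquiv.funUnique {j : Fin k // j = i} ℝ) a - q j))
      ∂(Measure.pi fun _ : {j : Fin k // j = i} => expMeasure lam))
      = ∫⁻ t, ENNReal.ofReal (∏ j ∈ univ.erase i, gre (q i + t - q j)) ∂(expMeasure lam) :=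
    hu.lintegral_comp hGmeas
  refine Eq.trans h2 ?_

  -- turn into a volume lintegral with density
  have h3 : ∫⁻ t, ENNReal.ofReal (∏ j ∈ univ.erase i, gre (q i + t - q j)) ∂(expMeasure lam)
      = ∫⁻ t, ENNReal.ofReal ((Set.Ici (qstar - q i)).indicator φ t) := by
    have hpdfm : Measurable (gammaPDF 1 lam) := (measurable_gammaPDFReal 1 lam).ennreal_ofReal
    rw [expMeasure, gammaMeasure, lintegral_withDensity_eq_lintegral_mul _ hpdfm hGmeas]
    congr 1
    ext t
    show gammaPDF 1 lam t * ENNReal.ofReal (∏ j ∈ univ.erase i, gre (q i + t - q j)) = _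
    rw [show gammaPDF 1 lam = exponentialPDF lam from rfl, exponentialPDF,
      ← ENNReal.ofReal_mul (exponentialPDFReal_nonneg hlam t)]
    congr 1
    -- pointwise identity
    by_cases ht : t ∈ Set.Ici (qstar - q i)
    · rw [Set.indicator_of_mem ht, hφ]
      have ht' : qstar - q i ≤ t := ht
      have ht0 : 0 ≤ t := le_trans (by linarith) ht'
      rw [exponentialPDFReal_eq', if_pos ht0]
      congr 1
      refine Finset.prod_congr rfl (fun j hj => ?_)
      have hqj : q j ≤ qstar := hqstar.2 (Set.mem_range_self j)
      have h0 : 0 ≤ q i + t - q j := by linarith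
      simp only [hgre]
      rw [if_pos h0, ← Real.exp_add]
      congr 2
      ring
    · rw [Set.indicator_of_notMem ht]
      have ht' : t < qstar - q i := lt_of_not_ge ht
      by_cases ht0 : 0 ≤ t
      · obtain ⟨j₀, hj₀⟩ := hqstar.1
        have hj₀i : j₀ ≠ i := by
          intro hx; rw [hx] at hj₀; linarith
        have : gre (q i + t - q j₀) = 0 := by
          simp only [hgre]
          rw [if_neg (not_le.2 (by rw [hj₀]; linarith : q i + t - q j₀ < 0))]
        rw [Finset.prod_eq_zero (Finset.mem_erase.2 ⟨hj₀i, Finset.mem_univ _⟩) this, mul_zero]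
      · rw [exponentialPDFReal_eq', if_neg ht0, zero_mul]
  rw [h3]
  rw [← ofReal_integral_eq_lintegral_ofReal]
  · rw [integral_indicator measurableSet_Ici, MeasureTheory.integral_Ici_eq_integral_Ioi]
  · exact (integrable_indicator_iff measurableSet_Ici).2 hInt
  · apply Filter.Eventually.of_forall
    intro t
    apply Set.indicator_nonneg
    intro x hx
    have hx' : qstar - q i ≤ x := hx
    rw [hφ]
    apply mul_nonneg (by positivity)
    apply Finset.prod_nonneg
    intro j hj
    have hqj : q j ≤ qstar := hqstar.2 (Set.mem_range_self j)
    rw [← Real.exp_add]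
    have : lam * (q j - q i) + -(lam * x) ≤ 0 := by nlinarith
    nlinarith [exp_le_one_iff.2 this]

theorem lhs_eval (k : ℕ) (p : Fin k → ℝ) (hp0 : ∀ j, 0 ≤ p j)
    (hp1 : ∀ j, p j ≤ 1) (i : Fin k) :
    permCoinsMeasure k p
        {w | w.2 i = true ∧ ∀ j : Fin k, w.1.symm j < w.1.symm i → w.2 j = false}
      = ENNReal.ofReal ((∑ σ : Equiv.Perm (Fin k),
          p i * ∏ j ∈ univ.filter (fun j => σ.symm j < σ.symm i), (1 - p j))
          / (Fintype.card (Equiv.Perm (Fin k)))) := by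
  classical
  have hmeas : MeasurableSet
      {w : Equiv.Perm (Fin k) × (Fin k → Bool) |
        w.2 i = true ∧ ∀ j : Fin k, w.1.symm j < w.1.symm i → w.2 j = false} :=
    (Set.to_countable _).measurableSet
  rw [permCoinsMeasure, Measure.prod_apply hmeas]
  have hslice : ∀ σ : Equiv.Perm (Fin k),
      (Measure.pi fun j => bernoulliMeasure (p j))
        (Prod.mk σ ⁻¹' {w : Equiv.Perm (Fin k) × (Fin k → Bool) |
          w.2 i = true ∧ ∀ j : Fin k, w.1.symm j < w.1.symm i → w.2 j = false})
      = ENNReal.ofReal (p i * ∏ j ∈ univ.filter (fun j => σ.symm j < σ.symm i), (1 - p j)) := by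
    intro σ
    have hset : (Prod.mk σ ⁻¹' {w : Equiv.Perm (Fin k) × (Fin k → Bool) |
          w.2 i = true ∧ ∀ j : Fin k, w.1.symm j < w.1.symm i → w.2 j = false})
        = Set.pi Set.univ (fun j => if j = i then {true} else
            if σ.symm j < σ.symm i then {false} else Set.univ) := by
      ext b
      simp only [Set.mem_preimage, Set.mem_setOf_eq, Set.mem_pi, Set.mem_univ, true_implies]
      constructor
      · rintro ⟨h1, h2⟩ j
        by_cases hj : j = i
        · subst hj; simp [h1]
        · simp only [hj, if_false]
          by_cases hlt : σ.symm j < σ.symm i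
          · simp [hlt, h2 j hlt]
          · simp [hlt]
      · intro h
        have hi := h i
        simp only [if_pos rfl, Set.mem_singleton_iff] at hi
        refine ⟨hi, fun j hlt => ?_⟩
        have hji : j ≠ i := fun hx => absurd hlt (by rw [hx]; exact lt_irrefl _)
        have hj := h j
        simp only [hji, if_false, hlt, if_true, Set.mem_singleton_iff] at hj
        exact hj
    rw [hset, Measure.pi_pi]
    have : ∀ j : Fin k, bernoulliMeasure (p j)
          (if j = i then {true} else if σ.symm j < σ.symm i then {false} else Set.univ)
        = ENNReal.ofReal (if j = i then p i else
            if σ.symm j < σ.symm i then 1 - p j else 1) := by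
      intro j
      by_cases hj : j = i
      · subst hj; simp [bern_true]
      · by_cases hlt : σ.symm j < σ.symm i
        · simp [hj, hlt, bern_false]
        · rw [if_neg hj, if_neg hlt, if_neg hj, if_neg hlt,
            bern_univ (p j) (hp0 j) (hp1 j), ENNReal.ofReal_one]
    rw [Finset.prod_congr rfl (fun j _ => this j),
      ← ENNReal.ofReal_prod_of_nonneg (fun j _ => by
        split_ifs with h1 h2
        · exact hp0 i
        · linarith [hp1 j]
        · norm_num)]
    congr 1
    rw [← Finset.mul_prod_erase univ _ (mem_univ i), if_pos rfl]
    congr 1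
    calc ∏ x ∈ univ.erase i,
          (if x = i then p i else if σ.symm x < σ.symm i then 1 - p x else 1)
        = ∏ x ∈ univ.erase i, (if σ.symm x < σ.symm i then 1 - p x else 1) :=
          Finset.prod_congr rfl (fun x hx => by rw [if_neg (Finset.mem_erase.1 hx).1])
      _ = ∏ x ∈ (univ.erase i).filter (fun x => σ.symm x < σ.symm i), (1 - p x) :=
          (Finset.prod_filter _ _).symm
      _ = ∏ x ∈ univ.filter (fun x => σ.symm x < σ.symm i), (1 - p x) := by
          congr 1
          ext x
          simp only [Finset.mem_filter, Finset.mem_erase, Finset.mem_univ, true_and, and_true]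
          constructor
          · exact And.right
          · intro h
            exact ⟨fun hx => absurd (hx ▸ h) (lt_irrefl _), h⟩
  rw [lintegral_fintype]
  have huni : ∀ σ : Equiv.Perm (Fin k),
      (PMF.uniformOfFintype (Equiv.Perm (Fin k))).toMeasure {σ}
        = ((Fintype.card (Equiv.Perm (Fin k)) : ℝ≥0∞))⁻¹ := by
    intro σ
    rw [PMF.toMeasure_apply_singleton _ _ (measurableSet_singleton σ),
      PMF.uniformOfFintype_apply]
  simp_rw [hslice, huni]
  rw [← Finset.sum_mul, ← ENNReal.ofReal_sum_of_nonneg (fun σ _ =>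
    mul_nonneg (hp0 i) (Finset.prod_nonneg (fun j hj => by
      have := hp1 j; linarith)))]
  have hcardpos : (0 : ℝ) < (Fintype.card (Equiv.Perm (Fin k)) : ℝ) := by
    exact_mod_cast Fintype.card_pos
  rw [ENNReal.ofReal_div_of_pos hcardpos, ENNReal.ofReal_natCast, div_eq_mul_inv]

theorem lhs_sum (k : ℕ) (i : Fin k) (p : Fin k → ℝ) :
    (∑ σ : Equiv.Perm (Fin k),
        p i * ∏ j ∈ univ.filter (fun j => σ.symm j < σ.symm i), (1 - p j))
      / (Fintype.card (Equiv.Perm (Fin k)))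
    = ∑ S ∈ (univ.erase i).powerset, (∏ j ∈ S, -(p j)) * p i / (S.card + 1) := by
  classical
  have hcard0 : (0:ℝ) < (Fintype.card (Equiv.Perm (Fin k)) : ℝ) := by
    exact_mod_cast Fintype.card_pos
  have hexp : ∀ σ : Equiv.Perm (Fin k),
      (∏ j ∈ univ.filter (fun j => σ.symm j < σ.symm i), (1 - p j))
        = ∑ S ∈ (univ.erase i).powerset,
            if (∀ j ∈ S, σ.symm j < σ.symm i) then ∏ j ∈ S, -(p j) else 0 := by
    intro σ
    rw [Finset.prod_congr rfl (fun j _ => by ring :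
        ∀ j ∈ univ.filter (fun j => σ.symm j < σ.symm i), (1 - p j) = -(p j) + 1),
      Finset.prod_add]
    simp only [Finset.prod_const_one, mul_one]
    rw [← Finset.sum_filter]
    apply Finset.sum_congr
    · ext S
      simp only [Finset.mem_powerset, Finset.mem_filter]
      constructor
      · intro hSB
        constructor
        · intro j hj
          have hlt := (Finset.mem_filter.1 (hSB hj)).2
          exact Finset.mem_erase.2 ⟨fun hx => absurd (hx ▸ hlt) (lt_irrefl _), Finset.mem_univ _⟩
        · exact fun j hj => (Finset.mem_filter.1 (hSB hj)).2
      · rintro ⟨h1, h2⟩ j hj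
        exact Finset.mem_filter.2 ⟨Finset.mem_univ _, h2 j hj⟩
    · intros; rfl
  simp_rw [hexp, Finset.mul_sum]
  rw [Finset.sum_comm, Finset.sum_div]
  apply Finset.sum_congr rfl
  intro S hS
  have hiS : i ∉ S := fun h =>
    (Finset.mem_erase.1 (Finset.mem_powerset.1 hS h)).1 rfl
  have hreal : ((Finset.univ.filter
        (fun σ : Equiv.Perm (Fin k) => ∀ j ∈ S, σ.symm j < σ.symm i)).card : ℝ)
        * (S.card + 1) = (Fintype.card (Equiv.Perm (Fin k)) : ℝ) := by
    exact_mod_cast perm_count k i S hiS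
  have hstep : (∑ σ : Equiv.Perm (Fin k),
      p i * if (∀ j ∈ S, σ.symm j < σ.symm i) then ∏ j ∈ S, -(p j) else 0)
      = p i * (((Finset.univ.filter
          (fun σ : Equiv.Perm (Fin k) => ∀ j ∈ S, σ.symm j < σ.symm i)).card : ℝ)
          * ∏ j ∈ S, -(p j)) := by
    rw [← Finset.mul_sum]
    congr 1
    rw [Finset.sum_ite, Finset.sum_const, Finset.sum_const_zero, add_zero, nsmul_eq_mul]
  rw [hstep]
  have hn1 : (0:ℝ) < (S.card : ℝ) + 1 := by positivity
  field_simp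
  linear_combination (p i * ∏ j ∈ S, -(p j)) * hreal


/-- **Permute-and-flip = report noisy max with exponential noise.**
For every outcome `i : Fin k`, the probability that permute-and-flip (with scores `q`, rate `lam`)
outputs `i` (i.e. that the coin of `i` lands heads and all coins of indices preceding `i` in the
random order land tails) equals the probability that `i` is the (a.s. unique) maximizer of
`q j + X j` where the `X j` are i.i.d. `Expo(lam)`. -/
theorem permuteAndFlip_eq_reportNoisyMax
    (k : ℕ) (q : Fin k → ℝ) (lam : ℝ) (hlam : 0 < lam)
    (qstar : ℝ) (hqstar : IsGreatest (Set.range q) qstar) :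
    ∀ i : Fin k,
      permCoinsMeasure k (fun j => exp (lam * (q j - qstar)))
        {w | w.2 i = true ∧ ∀ j : Fin k, w.1.symm j < w.1.symm i → w.2 j = false}
      = Measure.pi (fun _ : Fin k => expMeasure lam)
        {x | ∀ j : Fin k, j ≠ i → q j + x j < q i + x i} := by
  intro i
  classical
  set p : Fin k → ℝ := fun j => exp (lam * (q j - qstar)) with hp
  have hp0 : ∀ j, 0 ≤ p j := fun j => (exp_pos _).le
  have hp1 : ∀ j, p j ≤ 1 := fun j => exp_le_one_iff.2 (by
    have := hqstar.2 (Set.mem_range_self j); nlinarith)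
  have hInt : IntegrableOn (fun t => lam * exp (-(lam * t)) *
      ∏ j ∈ univ.erase i, (1 - exp (lam * (q j - q i)) * exp (-(lam * t))))
      (Set.Ici (qstar - q i)) := by
    rw [funext (sum_form lam (univ.erase i) (fun j => exp (lam * (q j - q i))))]
    apply integrable_finset_sum
    intro S _
    exact (integrableOn_Ici_iff_integrableOn_Ioi).2 (integrable_term lam hlam _ S.card _)
  rw [lhs_eval k p hp0 hp1 i, rhs_eval k q lam hlam qstar hqstar i hInt]
  congr 1
  rw [lhs_sum k i p, integral_eval lam hlam (univ.erase i)
    (fun j => exp (lam * (q j - q i))) (qstar - q i)]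
  refine Finset.sum_congr rfl fun S hS => ?_
  congr 1
  have hkey : (∏ j ∈ S, -(exp (lam * (q j - q i)))) * exp (lam * (q i - qstar)) ^ S.card
      = ∏ j ∈ S, -(p j) := by
    rw [← Finset.prod_const, ← Finset.prod_mul_distrib]
    refine Finset.prod_congr rfl fun j _ => ?_
    rw [neg_mul, ← Real.exp_add,
      show lam * (q j - q i) + lam * (q i - qstar) = lam * (q j - qstar) by ring]
  have hE : exp (-(lam * (qstar - q i))) = exp (lam * (q i - qstar)) := by
    congr 1; ring
  rw [hE, pow_succ, ← mul_assoc, hkey]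
end

section
/- The Algorithm-A distribution with scores q and rate λ is equal, as a probability distribution on Fin k, to the Algorithm-B distribution with the same scores q and rate λ. -/
open MeasureTheory ProbabilityTheory Real
open scoped ENNReal

section AlgoABAux

open Set Filter
open scoped Topology

private lemma algoAB_expMeasure_Iio {lam : ℝ} (hlam : 0 < lam) (t : ℝ) :
    expMeasure lam (Set.Iio t) = ENNReal.ofReal (if 0 ≤ t then 1 - rexp (-(lam * t)) else 0) := by
  have h0 : expMeasure lam = volume.withDensity (exponentialPDF lam) := rfl
  rw [h0, withDensity_apply _ measurableSet_Iio,
    setLIntegral_congr (Iio_ae_eq_Iic (a := t) (μ := volume))]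
  exact lintegral_exponentialPDF_eq_antiDeriv hlam t

private lemma algoAB_pow_cdf_lintegral {lam : ℝ} (hlam : 0 < lam) (m : ℕ) :
    ∫⁻ t, (expMeasure lam (Set.Iio t)) ^ m ∂(expMeasure lam)
      = (((m + 1 : ℕ) : ℝ≥0∞))⁻¹ := by
  set f' : ℝ → ℝ := fun t => (1 - rexp (-(lam * t))) ^ m * (lam * rexp (-(lam * t))) with hf'
  have hcont : Continuous f' := by
    have h1 : Continuous fun t : ℝ => rexp (-(lam * t)) :=
      (continuous_const.mul continuous_id).neg.rexp
    exact ((continuous_const.sub h1).pow m).mul (continuous_const.mul h1)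
  have hexp_le_one : ∀ t : ℝ, 0 ≤ t → rexp (-(lam * t)) ≤ 1 := fun t ht => by
    rw [exp_le_one_iff]; nlinarith
  have h0 : expMeasure lam = volume.withDensity (exponentialPDF lam) := rfl
  have hgmeas : Measurable fun t => (expMeasure lam (Set.Iio t)) ^ m := by
    have hmono : Monotone fun t => expMeasure lam (Set.Iio t) :=
      fun s t hst => measure_mono (Set.Iio_subset_Iio hst)
    exact Monotone.measurable fun s t hst => pow_le_pow_left' (hmono hst) m
  have hrw := lintegral_withDensity_eq_lintegral_mul volume
    (measurable_exponentialPDFReal lam).ennreal_ofReal hgmeas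
  rw [show (fun x => ENNReal.ofReal (exponentialPDFReal lam x)) = exponentialPDF lam from rfl,
    ← h0] at hrw
  rw [hrw]
  have hae : (fun t => (exponentialPDF lam * fun t => (expMeasure lam (Set.Iio t)) ^ m) t)
      =ᵐ[volume] fun t => (Set.Ioi (0:ℝ)).indicator (fun t => ENNReal.ofReal (f' t)) t := by
    filter_upwards [compl_mem_ae_iff.2 (volume_singleton (a := (0:ℝ)))] with t ht
    simp only [Set.mem_compl_iff, Set.mem_singleton_iff] at ht
    rcases lt_or_gt_of_ne ht with h | h
    · rw [Set.indicator_of_notMem (by simpa using h.le), Pi.mul_apply,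
        exponentialPDF_of_neg h, zero_mul]
    · rw [Set.indicator_of_mem (Set.mem_Ioi.2 h), Pi.mul_apply, exponentialPDF_of_nonneg h.le,
        algoAB_expMeasure_Iio hlam, if_pos h.le,
        ← ENNReal.ofReal_pow (by nlinarith [hexp_le_one t h.le]),
        ← ENNReal.ofReal_mul (by positivity), hf']
      ring_nf
  rw [lintegral_congr_ae hae, lintegral_indicator measurableSet_Ioi _]
  have hbound : IntegrableOn (fun t => lam * rexp (-lam * t)) (Set.Ioi (0:ℝ)) :=
    (exp_neg_integrableOn_Ioi 0 hlam).const_mul lam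
  have hint : IntegrableOn f' (Set.Ioi (0:ℝ)) := by
    refine Integrable.mono hbound (hcont.aestronglyMeasurable.restrict) ?_
    rw [ae_restrict_iff' measurableSet_Ioi]
    filter_upwards with t ht
    have h1 : 0 ≤ 1 - rexp (-(lam * t)) := by nlinarith [hexp_le_one t ht.le]
    have h2 : (1 - rexp (-(lam * t))) ^ m ≤ 1 :=
      pow_le_one₀ h1 (by nlinarith [Real.exp_pos (-(lam * t))])
    have h3 : 0 ≤ lam * rexp (-(lam * t)) := by positivity
    rw [Real.norm_eq_abs, Real.norm_eq_abs, abs_of_nonneg (by positivity),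
      abs_of_nonneg (by rw [neg_mul]; positivity)]
    rw [neg_mul]
    simpa [hf'] using mul_le_of_le_one_left h3 h2
  have hnn : 0 ≤ᵐ[volume.restrict (Set.Ioi (0:ℝ))] f' := by
    rw [EventuallyLE, ae_restrict_iff' measurableSet_Ioi]
    filter_upwards with t ht
    have h1 : 0 ≤ 1 - rexp (-(lam * t)) := by nlinarith [hexp_le_one t ht.le]
    simp only [hf']
    positivity
  rw [← ofReal_integral_eq_lintegral_ofReal hint hnn]
  have hderiv : ∀ t ∈ Set.Ici (0:ℝ),
      HasDerivAt (fun t => (1 - rexp (-(lam * t))) ^ (m + 1) / (m + 1)) (f' t) t := by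
    intro t _
    have h1 : HasDerivAt (fun a => 1 - rexp (-(lam * a))) (lam * rexp (-(lam * t))) t := by
      simpa [sub_eq_add_neg] using
        (hasDerivAt_neg_exp_mul_exp (r := lam) (x := t)).const_add 1
    have h2 := (h1.pow (m + 1)).div_const ((m : ℝ) + 1)
    convert h2 using 1
    · rfl
    · rfl
    · rfl
    · simp only [hf']
      push_cast
      field_simp
  have hexp0 : Tendsto (fun t : ℝ => rexp (-(lam * t))) atTop (𝓝 0) := by
    have h1 : Tendsto (fun t : ℝ => lam * t) atTop atTop :=
      Tendsto.const_mul_atTop hlam tendsto_id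
    exact (tendsto_exp_neg_atTop_nhds_zero).comp h1
  have htend : Tendsto (fun t => (1 - rexp (-(lam * t))) ^ (m + 1) / (m + 1)) atTop
      (𝓝 (1 / (m + 1))) := by
    have h4 : Tendsto (fun t => (1 - rexp (-(lam * t))) ^ (m + 1) / ((m : ℝ) + 1)) atTop
        (𝓝 (((1:ℝ) - 0) ^ (m + 1) / ((m : ℝ) + 1))) :=
      (((tendsto_const_nhds (x := (1:ℝ))).sub hexp0).pow (m + 1)).div_const ((m : ℝ) + 1)
    simpa using h4
  rw [integral_Ioi_of_hasDerivAt_of_tendsto' hderiv hint htend]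
  rw [show (1 : ℝ) / (m + 1) - (1 - rexp (-(lam * 0))) ^ (m + 1) / (m + 1) = ((m:ℝ)+1)⁻¹ by
    simp [one_div]]
  rw [ENNReal.ofReal_inv_of_pos (by positivity)]
  congr 1
  rw [show ((m:ℝ) + 1) = ((m + 1 : ℕ) : ℝ) by push_cast; ring, ENNReal.ofReal_natCast]

private lemma algoAB_pi_measure_max {lam : ℝ} (hlam : 0 < lam) {k : ℕ} (T : Finset (Fin k))
    (i : Fin k) :
    Measure.pi (fun _ : Fin k => expMeasure lam) {z | ∀ j ∈ T, j ≠ i → z j < z i}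
      = ∫⁻ t, (expMeasure lam (Set.Iio t)) ^ (T.erase i).card ∂(expMeasure lam) := by
  classical
  haveI hprob : IsProbabilityMeasure (expMeasure lam) := isProbabilityMeasure_expMeasure hlam
  set ν := expMeasure lam with hν
  set A : Set (Fin k → ℝ) := {z | ∀ j ∈ T, j ≠ i → z j < z i} with hA'
  have hA : MeasurableSet A := by
    have : A = ⋂ j ∈ T, ⋂ (_ : j ≠ i), {z : Fin k → ℝ | z j < z i} := by
      ext z; simp [hA', Set.mem_iInter]
    rw [this]
    exact MeasurableSet.biInter (Set.to_countable _) fun j _ =>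
      MeasurableSet.iInter fun _ => measurableSet_lt (measurable_pi_apply _) (measurable_pi_apply _)
  set e := MeasurableEquiv.piEquivPiSubtypeProd (fun _ : Fin k => ℝ) (fun j => j = i) with he
  have hmp := MeasureTheory.measurePreserving_piEquivPiSubtypeProd
    (fun _ : Fin k => ν) (fun j => j = i)
  have hmp2 := hmp.symm e
  have key := hmp2.measure_preimage hA.nullMeasurableSet
  rw [← key, Measure.prod_apply (hA.preimage e.symm.measurable)]
  have hpre : ∀ a : {j // j = i} → ℝ,
      (Prod.mk a ⁻¹' (e.symm ⁻¹' A))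
        = Set.univ.pi fun j : {j // ¬ j = i} =>
            (if (j : Fin k) ∈ T then Set.Iio (a ⟨i, rfl⟩) else Set.univ) := by
    intro a
    ext b
    have hsymm : ∀ j : Fin k, e.symm (a, b) j = if h : j = i then a ⟨j, h⟩ else b ⟨j, h⟩ :=
      fun j => rfl
    simp only [Set.mem_preimage, Set.mem_pi, Set.mem_univ, forall_true_left, hA',
      Set.mem_setOf_eq]
    constructor
    · intro h j
      by_cases hjT : (j : Fin k) ∈ T
      · simp only [hjT, if_true, Set.mem_Iio]
        have := h j hjT j.2
        rwa [hsymm, hsymm, dif_neg j.2, dif_pos rfl] at this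
      · simp [hjT]
    · intro h j hjT hji
      rw [hsymm, hsymm, dif_neg hji, dif_pos rfl]
      have := h ⟨j, hji⟩
      rwa [if_pos hjT, Set.mem_Iio] at this
  have hcard : (Finset.univ.filter (fun j : {j // ¬ j = i} => (j : Fin k) ∈ T)).card
      = (T.erase i).card := by
    refine Finset.card_bij (fun a _ => (a : Fin k)) ?_ ?_ ?_
    · intro a ha
      simp only [Finset.mem_filter] at ha
      exact Finset.mem_erase.2 ⟨a.2, ha.2⟩
    · intro a _ b _ hab
      exact Subtype.ext hab
    · intro b hb
      rcases Finset.mem_erase.1 hb with ⟨hbi, hbT⟩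
      exact ⟨⟨b, hbi⟩, Finset.mem_filter.2 ⟨Finset.mem_univ _, hbT⟩, rfl⟩
  have hinner : ∀ a : {j // j = i} → ℝ,
      (Measure.pi fun _ : {j // ¬ j = i} => ν) (Prod.mk a ⁻¹' (e.symm ⁻¹' A))
        = (ν (Set.Iio (a ⟨i, rfl⟩))) ^ (T.erase i).card := by
    intro a
    rw [hpre a, Measure.pi_pi]
    rw [show (∏ j : {j // ¬ j = i},
        ν (if (j : Fin k) ∈ T then Set.Iio (a ⟨i, rfl⟩) else Set.univ))
      = ∏ j : {j // ¬ j = i},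
        (if (j : Fin k) ∈ T then ν (Set.Iio (a ⟨i, rfl⟩)) else 1) from
      Finset.prod_congr rfl fun j _ => by split_ifs <;> simp]
    rw [← Finset.prod_filter, Finset.prod_const, hcard]
  rw [lintegral_congr hinner]
  have hmono : Monotone fun t => ν (Set.Iio t) :=
    fun s t hst => measure_mono (Set.Iio_subset_Iio hst)
  have hgmeas : Measurable fun t => (ν (Set.Iio t)) ^ (T.erase i).card :=
    Monotone.measurable fun s t hst => pow_le_pow_left' (hmono hst) _
  have hfu := MeasureTheory.measurePreserving_funUnique (β := ℝ) ν {j // j = i}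
  have := hfu.lintegral_comp hgmeas
  have hinsteq : (Unique.fintype : Fintype {j // j = i}) = Subtype.fintype (fun j => j = i) :=
    Subsingleton.elim _ _
  rw [hinsteq] at this
  rw [← this]
  rfl

end AlgoABAux

/-- **Algorithm A = Algorithm B.**
For every outcome `i : Fin k`, the probability that Algorithm A (with scores `q`, rate `lam`)
outputs `i` — the expected value, over i.i.d. `X j ~ Expo(lam)`, of the probability
`1/|S|·1[i ∈ S]` that a uniformly random element of `S = {j | q j + X j ≥ q*}` equals `i` —
equals the probability that Algorithm B outputs `i`, i.e. that (for i.i.d. `X j ~ Expo(lam)` and,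
independently, i.i.d. `Z j ~ Expo(lam)`) `i` belongs to `S' = {j | q j + X j ≥ q*}` and `Z i` is
the (a.s. unique) maximum of `Z` over `S'`. -/
theorem algorithmA_eq_algorithmB
    (k : ℕ) (q : Fin k → ℝ) (lam : ℝ) (hlam : 0 < lam)
    (qstar : ℝ) (hqstar : IsGreatest (Set.range q) qstar) :
    ∀ i : Fin k,
      (∫⁻ x, (if qstar ≤ q i + x i then
            (((Finset.univ.filter (fun j : Fin k => qstar ≤ q j + x j)).card : ℝ≥0∞))⁻¹ else 0)
          ∂(Measure.pi fun _ : Fin k => expMeasure lam))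
      = ((Measure.pi fun _ : Fin k => expMeasure lam).prod
            (Measure.pi fun _ : Fin k => expMeasure lam))
          {w | qstar ≤ q i + w.1 i ∧
            ∀ j : Fin k, j ≠ i → qstar ≤ q j + w.1 j → w.2 j < w.2 i} := by
  intro i
  haveI hprob : IsProbabilityMeasure (expMeasure lam) := isProbabilityMeasure_expMeasure hlam
  have hS : MeasurableSet {w : (Fin k → ℝ) × (Fin k → ℝ) | qstar ≤ q i + w.1 i ∧
      ∀ j : Fin k, j ≠ i → qstar ≤ q j + w.1 j → w.2 j < w.2 i} := by
    apply MeasurableSet.inter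
    · exact measurableSet_le measurable_const
        (measurable_const.add ((measurable_pi_apply i).comp measurable_fst))
    · have h1 : {w : (Fin k → ℝ) × (Fin k → ℝ) |
          ∀ j : Fin k, j ≠ i → qstar ≤ q j + w.1 j → w.2 j < w.2 i}
          = ⋂ j : Fin k, ⋂ (_ : j ≠ i),
            ({w : (Fin k → ℝ) × (Fin k → ℝ) | qstar ≤ q j + w.1 j}ᶜ
              ∪ {w | w.2 j < w.2 i}) := by
        ext w
        simp only [Set.mem_setOf_eq, Set.mem_iInter, Set.mem_union, Set.mem_compl_iff]
        constructor
        · intro h j hj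
          by_cases hq : qstar ≤ q j + w.1 j
          · exact Or.inr (h j hj hq)
          · exact Or.inl hq
        · intro h j hj hq
          rcases h j hj with h' | h'
          · exact absurd hq h'
          · exact h'
      show MeasurableSet {w : (Fin k → ℝ) × (Fin k → ℝ) |
          ∀ j : Fin k, j ≠ i → qstar ≤ q j + w.1 j → w.2 j < w.2 i}
      rw [h1]
      refine MeasurableSet.iInter fun j => MeasurableSet.iInter fun _ => ?_
      refine ((measurableSet_le measurable_const
        (measurable_const.add ((measurable_pi_apply j).comp measurable_fst))).compl).union
        (measurableSet_lt ?_ ?_)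
      · exact (measurable_pi_apply j).comp measurable_snd
      · exact (measurable_pi_apply i).comp measurable_snd
  rw [Measure.prod_apply hS]
  refine lintegral_congr fun x => ?_
  by_cases h : qstar ≤ q i + x i
  · rw [if_pos h]
    have hmem : i ∈ Finset.univ.filter (fun j : Fin k => qstar ≤ q j + x j) :=
      Finset.mem_filter.2 ⟨Finset.mem_univ _, h⟩
    have hset : (Prod.mk x ⁻¹' {w : (Fin k → ℝ) × (Fin k → ℝ) | qstar ≤ q i + w.1 i ∧
          ∀ j : Fin k, j ≠ i → qstar ≤ q j + w.1 j → w.2 j < w.2 i})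
        = {z : Fin k → ℝ |
            ∀ j ∈ Finset.univ.filter (fun j : Fin k => qstar ≤ q j + x j), j ≠ i → z j < z i} := by
      ext z
      simp only [Set.mem_preimage, Set.mem_setOf_eq, Finset.mem_filter, Finset.mem_univ, true_and]
      constructor
      · rintro ⟨_, h2⟩ j hj hji
        exact h2 j hji hj
      · intro h2
        exact ⟨h, fun j hji hq => h2 j hq hji⟩
    rw [hset, algoAB_pi_measure_max hlam _ i, algoAB_pow_cdf_lintegral hlam]
    congr 1
    exact_mod_cast (Finset.card_erase_add_one hmem).symm
  · rw [if_neg h]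
    have hempty : (Prod.mk x ⁻¹' {w : (Fin k → ℝ) × (Fin k → ℝ) | qstar ≤ q i + w.1 i ∧
          ∀ j : Fin k, j ≠ i → qstar ≤ q j + w.1 j → w.2 j < w.2 i}) = ∅ := by
      ext z
      simp [h]
    rw [hempty, measure_empty]
end
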